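/- Let X be a two-dimensional real Banach space which is not strictly convex (i.e., there exist unit vectors u ≠ v with ‖u + v‖ = 2, equivalently the unit sphere contains a nondegenerate line segment). Then there exists a bounded linear operator T : X → X which is an extreme point of the closed unit ball of L(X) but is not an isometry. -/

import Mathlib

theorem stmt_9 {X : Type*} [NormedAddCommGroup X] [NormedSpace ℝ X] [CompleteSpace X]
    (hdim : Module.finrank ℝ X = 2)
    (hnsc : ∃ u v : X, ‖u‖ = 1 ∧ ‖v‖ = 1 ∧ u ≠ v ∧ ‖u + v‖ = 2) :
    ∃ T : X →L[ℝ] X,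
      T ∈ Set.extremePoints ℝ (Metric.closedBall (0 : X →L[ℝ] X) 1) ∧
      ¬ (∀ x : X, ‖T x‖ = ‖x‖) := by
  obtain ⟨u, v, hu, hv, huv, hsum⟩ := hnsc
  have hfd : FiniteDimensional ℝ X := FiniteDimensional.of_finrank_pos (by omega)
  -- u and v are linearly independent
  have hu0 : u ≠ 0 := by intro h; simp [h] at hu
  have hind : LinearIndependent ℝ ![u, v] := by
    rw [LinearIndependent.pair_iff' hu0]
    intro a ha
    have habs : |a| = 1 := by
      have := congrArg norm ha
      rwa [norm_smul, hu, mul_one, hv, Real.norm_eq_abs] at this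
    rcases abs_eq (by norm_num : (0:ℝ) ≤ 1) |>.1 habs with h1 | h1
    · rw [h1, one_smul] at ha; exact huv ha
    · rw [h1, neg_one_smul] at ha
      have : u + v = 0 := by rw [← ha]; abel
      rw [this, norm_zero] at hsum; norm_num at hsum
  -- dual vector g with g (u+v) = 2, hence g u = g v = 1
  have hne : u + v ≠ 0 := by
    intro h; rw [h, norm_zero] at hsum; norm_num at hsum
  obtain ⟨g, hg1, hg2⟩ := exists_dual_vector ℝ (u + v) (norm_ne_zero_iff.mpr hne)
  have hgu1 : |g u| ≤ 1 := by
    calc |g u| = ‖g u‖ := rfl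
    _ ≤ ‖g‖ * ‖u‖ := g.le_opNorm u
    _ = 1 := by rw [hg1, hu, mul_one]
  have hgv1 : |g v| ≤ 1 := by
    calc |g v| = ‖g v‖ := rfl
    _ ≤ ‖g‖ * ‖v‖ := g.le_opNorm v
    _ = 1 := by rw [hg1, hv, mul_one]
  have hguv : g u + g v = 2 := by
    have : g (u + v) = (2 : ℝ) := by rw [hg2, hsum]; norm_num
    rw [← this, map_add]
  have hgu : g u = 1 := by
    have := abs_le.1 hgu1; have := abs_le.1 hgv1; linarith [(abs_le.1 hgu1).2, (abs_le.1 hgv1).2, (abs_le.1 hgu1).1, (abs_le.1 hgv1).1]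
  have hgv : g v = 1 := by linarith
  -- extreme point y of the unit ball
  obtain ⟨y, hy⟩ := (isCompact_closedBall (0 : X) 1).extremePoints_nonempty
    ⟨0, by simp⟩
  rw [mem_extremePoints] at hy
  have hy1 : ‖y‖ ≤ 1 := by simpa using hy.1
  -- the operator T = g ⊗ y
  refine ⟨g.smulRight y, ?_, ?_⟩
  · rw [mem_extremePoints]
    constructor
    · rw [Metric.mem_closedBall, dist_zero_right, ContinuousLinearMap.norm_smulRight_apply,
        hg1, one_mul]
      exact hy1
    · intro A hA B hB hT
      obtain ⟨a, b, ha, hb, hab, habT⟩ := hT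
      have hAn : ‖A‖ ≤ 1 := by simpa using hA
      have hBn : ‖B‖ ≤ 1 := by simpa using hB
      -- key: for any unit vector x with T x = y, A x = B x = y
      have key : ∀ x : X, ‖x‖ = 1 → g x = 1 → A x = y ∧ B x = y := by
        intro x hx hgx
        have hTx : (g.smulRight y) x = y := by
          simp [ContinuousLinearMap.smulRight_apply, hgx]
        have hAx : A x ∈ Metric.closedBall (0 : X) 1 := by
          rw [Metric.mem_closedBall, dist_zero_right]
          calc ‖A x‖ ≤ ‖A‖ * ‖x‖ := A.le_opNorm x
          _ ≤ 1 := by rw [hx, mul_one]; exact hAn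
        have hBx : B x ∈ Metric.closedBall (0 : X) 1 := by
          rw [Metric.mem_closedBall, dist_zero_right]
          calc ‖B x‖ ≤ ‖B‖ * ‖x‖ := B.le_opNorm x
          _ ≤ 1 := by rw [hx, mul_one]; exact hBn
        have hyseg : y ∈ openSegment ℝ (A x) (B x) := by
          refine ⟨a, b, ha, hb, hab, ?_⟩
          have := congrArg (fun (S : X →L[ℝ] X) => S x) habT
          simpa [hTx] using this
        exact hy.2 _ hAx _ hBx hyseg
      obtain ⟨hAu, hBu⟩ := key u hu hgu
      obtain ⟨hAv, hBv⟩ := key v hv hgv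
      -- A, B, T agree on the basis {u, v}
      have hcard : Fintype.card (Fin 2) = Module.finrank ℝ X := by simp [hdim]
      let bX := basisOfLinearIndependentOfCardEqFinrank hind hcard
      have hbX : ⇑bX = ![u, v] := coe_basisOfLinearIndependentOfCardEqFinrank hind hcard
      have hext : ∀ C : X →L[ℝ] X, C u = y → C v = y → C = g.smulRight y := by
        intro C hCu hCv
        apply ContinuousLinearMap.coe_injective
        apply Module.Basis.ext bX
        intro i
        fin_cases i <;>
          simp [hbX, hCu, hCv, ContinuousLinearMap.smulRight_apply, hgu, hgv]
      exact ⟨hext A hAu hAv, hext B hBu hBv⟩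
  · intro h
    have h1 := h (u - v)
    have h2 : (g.smulRight y) (u - v) = 0 := by
      simp [ContinuousLinearMap.smulRight_apply, hgu, hgv]
    rw [h2, norm_zero] at h1
    exact huv (sub_eq_zero.1 (norm_eq_zero.1 h1.symm))
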